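/- For all natural numbers k ≤ n with n ≥ 1, the sum ∑_{i=0}^{k} C(n,i) is at most (e·n/k)^k, where e is Euler's number (with the convention that the bound is interpreted as holding for k ≥ 1; for k = 0 the sum is 1). -/
import Mathlib


/-- For all natural numbers `1 ≤ k ≤ n`, `∑_{i=0}^{k} C(n,i) ≤ (e·n/k)^k`. -/
theorem stmt_1 (n k : ℕ) (hn : 1 ≤ n) (hk : 1 ≤ k) (hkn : k ≤ n) :
    (∑ i ∈ Finset.range (k + 1), (n.choose i : ℝ)) ≤ (Real.exp 1 * n / k) ^ k := by
  have hn0 : (0:ℝ) < n := by exact_mod_cast hn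
  have hk0 : (0:ℝ) < k := by exact_mod_cast hk
  set x : ℝ := (k:ℝ) / n with hxdef
  have hx0 : 0 < x := by positivity
  have hx1 : x ≤ 1 := by
    rw [div_le_one hn0]; exact_mod_cast hkn
  have h1 : (∑ i ∈ Finset.range (k + 1), (n.choose i : ℝ)) * x ^ k
      ≤ ∑ i ∈ Finset.range (k + 1), (n.choose i : ℝ) * x ^ i := by
    rw [Finset.sum_mul]
    apply Finset.sum_le_sum
    intro i hi
    have hik : i ≤ k := Nat.lt_succ_iff.mp (Finset.mem_range.mp hi)
    exact mul_le_mul_of_nonneg_left (pow_le_pow_of_le_one hx0.le hx1 hik)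
      (by positivity)
  have h2 : ∑ i ∈ Finset.range (k + 1), (n.choose i : ℝ) * x ^ i ≤ (1 + x) ^ n := by
    rw [add_comm (1:ℝ) x, add_pow]
    simp only [one_pow, mul_one]
    simp_rw [mul_comm ((n.choose _ : ℝ))]
    apply Finset.sum_le_sum_of_subset_of_nonneg
    · exact Finset.range_subset_range.mpr (by omega)
    · intro i _ _; positivity
  have h3 : (1 + x) ^ n ≤ Real.exp 1 ^ k := by
    have hxn : x * (n:ℝ) = k := div_mul_cancel₀ (k:ℝ) hn0.ne'
    calc (1 + x) ^ n ≤ Real.exp x ^ n := by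
          apply pow_le_pow_left₀ (by positivity)
          linarith [Real.add_one_le_exp x]
      _ = Real.exp (x * n) := by rw [← Real.exp_nat_mul]; ring_nf
      _ = Real.exp 1 ^ k := by rw [hxn, ← Real.exp_nat_mul, mul_one]
  have h4 : (∑ i ∈ Finset.range (k + 1), (n.choose i : ℝ)) * x ^ k ≤ Real.exp 1 ^ k :=
    le_trans h1 (le_trans h2 h3)
  have hxk : 0 < x ^ k := by positivity
  rw [← le_div_iff₀ hxk] at h4
  calc (∑ i ∈ Finset.range (k + 1), (n.choose i : ℝ)) ≤ Real.exp 1 ^ k / x ^ k := h4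
    _ = (Real.exp 1 * n / k) ^ k := by
        rw [← div_pow]
        congr 1
        rw [hxdef]
        field_simp
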